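/- As p → ∞, the standard normal quantile a_p = Φ^{-1}(1 − 1/(2p)) admits the expansion a_p = √(2 log p) − (log log p + log π)/(2 √(2 log p)) + o(1/√(log p)); equivalently, √(log p) · ( Φ^{-1}(1 − 1/(2p)) − √(2 log p) + (log log p + log π)/(2 √(2 log p)) ) → 0 as p → ∞. -/

import Mathlib

open MeasureTheory ProbabilityTheory Filter Real Set


/-- The standard normal cumulative distribution function `Φ`. -/
noncomputable def stdNormalCDF (x : ℝ) : ℝ :=
  ((gaussianReal 0 1) (Set.Iic x)).toReal

lemma intExp : Integrable (fun t : ℝ => Real.exp (-t^2/2)) := by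
  have := integrable_exp_neg_mul_sq (by norm_num : (0:ℝ) < 1/2)
  convert this using 2 with t
  ring_nf

lemma pdf_eq (t : ℝ) : gaussianPDFReal 0 1 t = (Real.sqrt (2*π))⁻¹ * Real.exp (-t^2/2) := by
  simp only [gaussianPDFReal]
  norm_num

lemma tailRepr (x : ℝ) :
    1 - stdNormalCDF x = (Real.sqrt (2*π))⁻¹ * ∫ t in Set.Ioi x, Real.exp (-t^2/2) := by
  have h1 : (gaussianReal 0 1) (Set.Iic x) + (gaussianReal 0 1) (Set.Ioi x) = 1 := by
    have := measure_add_measure_compl (μ := gaussianReal 0 1) (measurableSet_Iic (a := x))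
    simpa [Set.compl_Iic] using this
  have h2 : (gaussianReal 0 1) (Set.Ioi x) =
      ENNReal.ofReal (∫ t in Set.Ioi x, gaussianPDFReal 0 1 t) :=
    gaussianReal_apply_eq_integral 0 one_ne_zero _
  have hnn : 0 ≤ ∫ t in Set.Ioi x, gaussianPDFReal 0 1 t :=
    integral_nonneg fun t => gaussianPDFReal_nonneg 0 1 t
  have hfin1 : (gaussianReal 0 1) (Set.Iic x) ≠ ⊤ := measure_ne_top _ _
  have hfin2 : (gaussianReal 0 1) (Set.Ioi x) ≠ ⊤ := measure_ne_top _ _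
  have h3 : stdNormalCDF x + ((gaussianReal 0 1) (Set.Ioi x)).toReal = 1 := by
    rw [stdNormalCDF, ← ENNReal.toReal_add hfin1 hfin2, h1]; simp
  have h4 : ((gaussianReal 0 1) (Set.Ioi x)).toReal = ∫ t in Set.Ioi x, gaussianPDFReal 0 1 t := by
    rw [h2, ENNReal.toReal_ofReal hnn]
  have h5 : ∫ t in Set.Ioi x, gaussianPDFReal 0 1 t
      = (Real.sqrt (2*π))⁻¹ * ∫ t in Set.Ioi x, Real.exp (-t^2/2) := by
    rw [← integral_const_mul]
    exact setIntegral_congr_fun measurableSet_Ioi fun t _ => pdf_eq t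
  linarith [h3, h4 ▸ h5]

lemma intExp' : Integrable (fun t : ℝ => Real.exp (-t^2/2)) := by
  have := integrable_exp_neg_mul_sq (by norm_num : (0:ℝ) < 1/2)
  convert this using 2 with t
  ring_nf

lemma intTExp : Integrable (fun t : ℝ => t * Real.exp (-t^2/2)) := by
  have := integrable_rpow_mul_exp_neg_mul_sq (by norm_num : (0:ℝ) < 1/2) (by norm_num : (-1:ℝ) < 1)
  convert this using 2 with t
  rw [Real.rpow_one]
  ring_nf

lemma expDeriv (t : ℝ) : HasDerivAt (fun u : ℝ => Real.exp (-u^2/2)) (-t * Real.exp (-t^2/2)) t := by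
  have h : HasDerivAt (fun u : ℝ => -u^2/2) (-t) t := by
    have := (hasDerivAt_pow 2 t).neg.div_const 2
    refine this.congr_deriv ?_; push_cast; ring
  simpa [mul_comm] using h.exp

lemma expTendsto : Tendsto (fun t : ℝ => Real.exp (-t^2/2)) atTop (nhds 0) := by
  apply Real.tendsto_exp_atBot.comp
  have : Tendsto (fun t : ℝ => t^2/2) atTop atTop :=
    (tendsto_pow_atTop two_ne_zero).atTop_div_const (by norm_num)
  simpa [neg_div] using tendsto_neg_atBot_iff.mpr this

lemma tail_ub {x : ℝ} (hx : 0 < x) :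
    ∫ t in Ioi x, Real.exp (-t^2/2) ≤ x⁻¹ * Real.exp (-x^2/2) := by
  have key : ∫ t in Ioi x, t * Real.exp (-t^2/2) = Real.exp (-x^2/2) := by
    have := integral_Ioi_of_hasDerivAt_of_tendsto' (a := x)
      (f := fun u : ℝ => -Real.exp (-u^2/2)) (f' := fun t => t * Real.exp (-t^2/2))
      (fun t _ => by simpa [neg_neg, neg_mul] using (expDeriv t).fun_neg)
      intTExp.integrableOn (by simpa using expTendsto.neg)
    simpa using this
  have mono : ∫ t in Ioi x, Real.exp (-t^2/2) ≤ ∫ t in Ioi x, (t/x) * Real.exp (-t^2/2) := by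
    apply setIntegral_mono_on intExp'.integrableOn
      ((intTExp.div_const x).integrableOn.congr_fun (fun t _ => by ring) measurableSet_Ioi)
      measurableSet_Ioi
    intro t ht
    have h1 : (1:ℝ) ≤ t/x := (one_le_div hx).2 (le_of_lt ht)
    nlinarith [Real.exp_pos (-t^2/2)]
  calc ∫ t in Ioi x, Real.exp (-t^2/2) ≤ ∫ t in Ioi x, (t/x) * Real.exp (-t^2/2) := mono
    _ = x⁻¹ * ∫ t in Ioi x, t * Real.exp (-t^2/2) := by
        rw [← integral_const_mul]; congr 1; ext t; ring
    _ = x⁻¹ * Real.exp (-x^2/2) := by rw [key]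


noncomputable def gfun (t : ℝ) : ℝ := -(t/(1+t^2)) * Real.exp (-t^2/2)
noncomputable def gder (t : ℝ) : ℝ := (1 - 2/(1+t^2)^2) * Real.exp (-t^2/2)

lemma gfunDeriv (t : ℝ) : HasDerivAt gfun (gder t) t := by
  have hden : (1 + t^2) ≠ 0 := by positivity
  have h1 : HasDerivAt (fun u : ℝ => u/(1+u^2)) ((1-t^2)/(1+t^2)^2) t := by
    have := (hasDerivAt_id t).div (((hasDerivAt_const t (1:ℝ)).add (hasDerivAt_pow 2 t))) hden
    refine this.congr_deriv ?_
    simp only [Pi.add_apply, id]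
    push_cast
    field_simp
    ring
  have := (h1.neg.mul (expDeriv t))
  refine this.congr_deriv ?_
  simp only [Pi.neg_apply]
  unfold gder
  field_simp
  ring
lemma gderInt : Integrable gder := by
  apply intExp'.mono' (Continuous.aestronglyMeasurable (by
    unfold gder
    apply Continuous.mul
    · exact continuous_const.sub (continuous_const.div (by continuity) (fun t => by positivity))
    · continuity))
  filter_upwards with t
  rw [Real.norm_eq_abs, gder, abs_mul, Real.abs_exp]
  have h1 : (1:ℝ) ≤ (1+t^2)^2 := by nlinarith [sq_nonneg t]
  have h2 : 2/(1+t^2)^2 ≤ 2 := by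
    rw [div_le_iff₀ (by positivity)]; nlinarith
  have h3 : 0 < 2/(1+t^2)^2 := by positivity
  have : |1 - 2/(1+t^2)^2| ≤ 1 := abs_le.2 ⟨by linarith, by linarith⟩
  nlinarith [Real.exp_pos (-t^2/2)]

lemma gfunTendsto : Tendsto gfun atTop (nhds 0) := by
  apply squeeze_zero_norm _ expTendsto
  intro t
  rw [gfun, Real.norm_eq_abs, abs_mul, abs_neg, Real.abs_exp]
  have h1 : |t/(1+t^2)| ≤ 1 := by
    rw [abs_div, abs_of_pos (by positivity : (0:ℝ) < 1+t^2), div_le_one (by positivity)]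
    nlinarith [sq_nonneg (|t|-1), sq_abs t]
  nlinarith [Real.exp_pos (-t^2/2)]

lemma tail_lb {x : ℝ} (hx : 0 < x) :
    x/(1+x^2) * Real.exp (-x^2/2) ≤ ∫ t in Ioi x, Real.exp (-t^2/2) := by
  have key : ∫ t in Ioi x, gder t = x/(1+x^2) * Real.exp (-x^2/2) := by
    have := integral_Ioi_of_hasDerivAt_of_tendsto' (a := x) (f := gfun) (f' := gder)
      (fun t _ => gfunDeriv t) gderInt.integrableOn gfunTendsto
    rw [this]; unfold gfun; ring
  rw [← key]
  apply setIntegral_mono_on gderInt.integrableOn intExp'.integrableOn measurableSet_Ioi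
  intro t _
  unfold gder
  have h2 : 0 < 2/(1+t^2)^2 := by positivity
  nlinarith [Real.exp_pos (-t^2/2)]

noncomputable def Lf (p : ℕ) : ℝ := Real.log p
noncomputable def sf (p : ℕ) : ℝ := Real.sqrt (2 * Lf p)
noncomputable def cf (p : ℕ) : ℝ := Real.log (Lf p) + Real.log π
noncomputable def df (r : ℝ) (p : ℕ) : ℝ := r * Real.sqrt 2 - cf p / 2
noncomputable def xf (r : ℝ) (p : ℕ) : ℝ := sf p + df r p / sf p
noncomputable def Ff (r : ℝ) (p : ℕ) : ℝ :=
  Real.log (2 * p) - (xf r p)^2/2 - Real.log (xf r p) - Real.log (Real.sqrt (2*π))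

lemma hLtop : Tendsto Lf atTop atTop :=
  Real.tendsto_log_atTop.comp tendsto_natCast_atTop_atTop

lemma sqrt_top : Tendsto Real.sqrt atTop atTop := by
  apply tendsto_atTop_atTop.2
  intro b
  refine ⟨b^2 ⊔ 0, fun x hx => ?_⟩
  calc b ≤ |b| := le_abs_self b
  _ = Real.sqrt (b^2) := (Real.sqrt_sq_eq_abs b).symm
  _ ≤ Real.sqrt x := Real.sqrt_le_sqrt (le_trans le_sup_left hx)

lemma hstop : Tendsto sf atTop atTop :=
  sqrt_top.comp ((tendsto_const_mul_atTop_of_pos (by norm_num : (0:ℝ) < 2)).mpr hLtop)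

lemma hlogdiv : Tendsto (fun y : ℝ => Real.log y / Real.sqrt (2*y)) atTop (nhds 0) := by
  have h := (isLittleO_log_rpow_atTop (by norm_num : (0:ℝ) < 1/2)).tendsto_div_nhds_zero
  have h2 : Tendsto (fun y : ℝ => (Real.sqrt 2)⁻¹ * (Real.log y / y ^ (1/2 : ℝ))) atTop (nhds 0) := by
    simpa using h.const_mul (Real.sqrt 2)⁻¹
  apply h2.congr'
  filter_upwards [eventually_ge_atTop (0:ℝ)] with y hy
  rw [Real.sqrt_mul (by norm_num) y, Real.sqrt_eq_rpow y]
  have hs2 : Real.sqrt 2 ≠ 0 := by positivity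
  field_simp

lemma hds (r : ℝ) : Tendsto (fun p => df r p / sf p) atTop (nhds 0) := by
  have h1 : Tendsto (fun p => r * Real.sqrt 2 / sf p) atTop (nhds 0) := by
    simpa [div_eq_mul_inv] using (hstop.inv_tendsto_atTop).const_mul (r * Real.sqrt 2)
  have h2 : Tendsto (fun p => Real.log (Lf p) / sf p) atTop (nhds 0) := by
    have := hlogdiv.comp hLtop
    exact this
  have h3 : Tendsto (fun p => Real.log π / sf p) atTop (nhds 0) := by
    simpa [div_eq_mul_inv] using (hstop.inv_tendsto_atTop).const_mul (Real.log π)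
  have := h1.sub ((h2.add h3).div_const 2)
  simp only [sub_zero, zero_div, zero_add, add_zero] at this
  apply this.congr
  intro p
  unfold df cf
  ring

lemma hxtop (r : ℝ) : Tendsto (xf r) atTop atTop :=
  hstop.atTop_add (hds r)

lemma hFf (r : ℝ) : Tendsto (Ff r) atTop (nhds (-(r * Real.sqrt 2))) := by
  have hq := hds r
  have hq2 : Tendsto (fun p => df r p / sf p / sf p) atTop (nhds 0) := by
    simpa [div_eq_mul_inv] using hq.mul hstop.inv_tendsto_atTop
  have hlog1 : Tendsto (fun p => Real.log (1 + df r p / sf p / sf p)) atTop (nhds 0) := by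
    have : Tendsto (fun p => 1 + df r p / sf p / sf p) atTop (nhds 1) := by
      simpa using (tendsto_const_nhds (x := (1:ℝ))).add hq2
    have hcont := (Real.continuousAt_log one_ne_zero).tendsto
    simpa [Function.comp_def] using hcont.comp this
  have hsq : Tendsto (fun p => (df r p / sf p)^2 / 2) atTop (nhds 0) := by
    simpa [sq] using ((hq.mul hq).div_const 2)
  -- limit of the explicit formula
  have hmain : Tendsto (fun p => -(r * Real.sqrt 2) - (df r p / sf p)^2/2
      - Real.log (1 + df r p / sf p / sf p)) atTop (nhds (-(r * Real.sqrt 2))) := by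
    have := ((tendsto_const_nhds (x := -(r * Real.sqrt 2))).sub hsq).sub hlog1
    simpa using this
  apply hmain.congr'
  -- eventual identity
  have hev1 : ∀ᶠ p : ℕ in atTop, 1 < Lf p := hLtop.eventually_gt_atTop 1
  have hev2 : ∀ᶠ p : ℕ in atTop, |df r p / sf p / sf p| < 1/2 := by
    have := hq2.eventually (eventually_abs_sub_lt (0:ℝ) (by norm_num : (0:ℝ) < 1/2))
    simpa using this
  have hev3 : ∀ᶠ p : ℕ in atTop, 2 ≤ p := eventually_ge_atTop 2
  filter_upwards [hev1, hev2, hev3] with p hL habs hp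
  have hppos : (0:ℝ) < p := by positivity
  have hLpos : (0:ℝ) < Lf p := by linarith
  have hspos : 0 < sf p := Real.sqrt_pos.2 (by linarith)
  have hs2 : sf p ^ 2 = 2 * Lf p := Real.sq_sqrt (by linarith)
  have hone : (0:ℝ) < 1 + df r p / sf p / sf p := by
    have := abs_lt.1 habs
    linarith [this.1]
  have hxpos : 0 < xf r p := by
    have : xf r p = sf p * (1 + df r p / sf p / sf p) := by
      unfold xf; field_simp
    rw [this]; positivity
  have hlogx : Real.log (xf r p) = Real.log (sf p) + Real.log (1 + df r p / sf p / sf p) := by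
    have hxe : xf r p = sf p * (1 + df r p / sf p / sf p) := by unfold xf; field_simp
    rw [hxe, Real.log_mul (ne_of_gt hspos) (ne_of_gt hone)]
  have hlogs : Real.log (sf p) = (Real.log 2 + Real.log (Lf p)) / 2 := by
    unfold sf
    rw [Real.log_sqrt (by linarith), Real.log_mul two_ne_zero (ne_of_gt hLpos)]
  have hlogsq : Real.log (Real.sqrt (2*π)) = (Real.log 2 + Real.log π) / 2 := by
    rw [Real.log_sqrt (by positivity), Real.log_mul two_ne_zero (ne_of_gt Real.pi_pos)]
  have hlog2p : Real.log (2 * p) = Real.log 2 + Lf p := by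
    rw [Real.log_mul two_ne_zero (ne_of_gt hppos)]; rfl
  have hxsq : (xf r p)^2 = 2 * Lf p + 2 * df r p + (df r p / sf p)^2 := by
    unfold xf
    field_simp
    nlinarith [hs2]
  unfold Ff
  rw [hlog2p, hxsq, hlogx, hlogs, hlogsq]
  unfold df cf
  ring

lemma hxpos_ev (r : ℝ) : ∀ᶠ p : ℕ in atTop, 0 < xf r p := (hxtop r).eventually_gt_atTop 0

lemma cdf_mono : Monotone stdNormalCDF := fun x y h =>
  ENNReal.toReal_mono (measure_ne_top _ _) (measure_mono (Set.Iic_subset_Iic.2 h))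

noncomputable def Gf (r : ℝ) (p : ℕ) : ℝ := Ff r p - Real.log (1 + ((xf r p)^2)⁻¹)

lemma hGf (r : ℝ) : Tendsto (Gf r) atTop (nhds (-(r * Real.sqrt 2))) := by
  have hx2 : Tendsto (fun p => (xf r p)^2) atTop atTop := by
    simpa [sq] using (hxtop r).atTop_mul_atTop₀ (hxtop r)
  have h1 : Tendsto (fun p => Real.log (1 + ((xf r p)^2)⁻¹)) atTop (nhds 0) := by
    have h2 : Tendsto (fun p => 1 + ((xf r p)^2)⁻¹) atTop (nhds 1) := by
      simpa using (tendsto_const_nhds (x := (1:ℝ))).add hx2.inv_tendsto_atTop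
    simpa [Function.comp_def] using (Real.continuousAt_log one_ne_zero).tendsto.comp h2
  have h3 := (hFf r).sub h1
  rw [sub_zero] at h3
  exact h3

/-- The standard normal quantile `a_p = Φ⁻¹(1 − 1/(2p))` satisfies
`a_p = √(2 log p) − (log log p + log π)/(2√(2 log p)) + o(1/√(log p))`. -/
theorem stmt3 (a : ℕ → ℝ) (ha : ∀ p : ℕ, 2 ≤ p → stdNormalCDF (a p) = 1 - 1 / (2 * (p : ℝ))) :
    Tendsto
      (fun p : ℕ =>
        Real.sqrt (Real.log p) *
          (a p - Real.sqrt (2 * Real.log p) +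
            (Real.log (Real.log p) + Real.log π) / (2 * Real.sqrt (2 * Real.log p))))
      atTop (nhds 0) := by
  rw [NormedAddCommGroup.tendsto_nhds_zero]
  intro ε hε
  have hsqrt2 : (0:ℝ) < Real.sqrt 2 := by positivity
  have hFneg : ∀ᶠ p : ℕ in atTop, Ff ε p < 0 :=
    (hFf ε).eventually_lt_const (by nlinarith)
  have hGpos : ∀ᶠ p : ℕ in atTop, 0 < Gf (-ε) p :=
    (hGf (-ε)).eventually_const_lt (by nlinarith)
  have hev1 : ∀ᶠ p : ℕ in atTop, 1 < Lf p := hLtop.eventually_gt_atTop 1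
  filter_upwards [hFneg, hGpos, hev1, hxpos_ev ε, hxpos_ev (-ε), eventually_ge_atTop 2]
    with p hF hG hL hxu hxl hp
  have hppos : (0:ℝ) < p := by
    have : (2:ℝ) ≤ p := by exact_mod_cast hp
    linarith
  have hLpos : (0:ℝ) < Lf p := by linarith
  have hspos : 0 < sf p := Real.sqrt_pos.2 (by unfold Lf at *; linarith)
  have hsqL : 0 < Real.sqrt (Lf p) := Real.sqrt_pos.2 hLpos
  have hpi : (0:ℝ) < Real.sqrt (2*π) := Real.sqrt_pos.2 (by positivity)
  have htail : ∀ x : ℝ, 1 - stdNormalCDF x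
      = (Real.sqrt (2*π))⁻¹ * ∫ t in Set.Ioi x, Real.exp (-t^2/2) := tailRepr
  have hap : 1 - stdNormalCDF (a p) = 1/(2*(p:ℝ)) := by rw [ha p hp]; ring
  -- upper bound: a p < xf ε p
  have hup : a p < xf ε p := by
    have hexp : Real.exp (Ff ε p) < 1 := Real.exp_lt_one_iff.2 hF
    have hid : Real.exp (Ff ε p)
        = (2*(p:ℝ)) * ((Real.sqrt (2*π))⁻¹ * ((xf ε p)⁻¹ * Real.exp (-(xf ε p)^2/2))) := by
      unfold Ff
      rw [show Real.log (2*(p:ℝ)) - (xf ε p)^2/2 - Real.log (xf ε p) - Real.log (Real.sqrt (2*π))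
          = Real.log (2*(p:ℝ)) + (-(xf ε p)^2/2) + (-(Real.log (xf ε p)))
            + (-(Real.log (Real.sqrt (2*π)))) from by ring,
        Real.exp_add, Real.exp_add, Real.exp_add, Real.exp_log (by positivity),
        Real.exp_neg, Real.exp_neg, Real.exp_log hxu, Real.exp_log hpi]
      ring
    have hlt : (Real.sqrt (2*π))⁻¹ * ((xf ε p)⁻¹ * Real.exp (-(xf ε p)^2/2)) < 1/(2*(p:ℝ)) := by
      rw [lt_div_iff₀ (by positivity)]
      calc (Real.sqrt (2*π))⁻¹ * ((xf ε p)⁻¹ * Real.exp (-(xf ε p)^2/2)) * (2*(p:ℝ))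
          = Real.exp (Ff ε p) := by rw [hid]; ring
        _ < 1 := hexp
    have htb : 1 - stdNormalCDF (xf ε p) < 1/(2*(p:ℝ)) := by
      rw [htail]
      calc (Real.sqrt (2*π))⁻¹ * ∫ t in Set.Ioi (xf ε p), Real.exp (-t^2/2)
          ≤ (Real.sqrt (2*π))⁻¹ * ((xf ε p)⁻¹ * Real.exp (-(xf ε p)^2/2)) :=
            mul_le_mul_of_nonneg_left (tail_ub hxu) (by positivity)
        _ < 1/(2*(p:ℝ)) := hlt
    by_contra hcon
    push_neg at hcon
    have := cdf_mono hcon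
    rw [← hap] at htb
    linarith
  -- lower bound: xf (-ε) p < a p
  have hlo : xf (-ε) p < a p := by
    have hexp : 1 < Real.exp (Gf (-ε) p) := by
      rw [← Real.exp_zero]
      exact Real.exp_lt_exp.2 hG
    have hx2pos : (0:ℝ) < 1 + ((xf (-ε) p)^2)⁻¹ := by positivity
    have hid : Real.exp (Gf (-ε) p)
        = (2*(p:ℝ)) * ((Real.sqrt (2*π))⁻¹
          * (xf (-ε) p/(1+(xf (-ε) p)^2) * Real.exp (-(xf (-ε) p)^2/2))) := by
      unfold Gf Ff
      rw [show Real.log (2*(p:ℝ)) - (xf (-ε) p)^2/2 - Real.log (xf (-ε) p)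
            - Real.log (Real.sqrt (2*π)) - Real.log (1 + ((xf (-ε) p)^2)⁻¹)
          = Real.log (2*(p:ℝ)) + (-(xf (-ε) p)^2/2) + (-(Real.log (xf (-ε) p)))
            + (-(Real.log (Real.sqrt (2*π)))) + (-(Real.log (1 + ((xf (-ε) p)^2)⁻¹))) from by ring,
        Real.exp_add, Real.exp_add, Real.exp_add, Real.exp_add, Real.exp_log (by positivity),
        Real.exp_neg, Real.exp_neg, Real.exp_neg, Real.exp_log hxl, Real.exp_log hpi,
        Real.exp_log hx2pos]
      have hxne : xf (-ε) p ≠ 0 := ne_of_gt hxl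
      field_simp
      ring
    have hlt : 1/(2*(p:ℝ)) < (Real.sqrt (2*π))⁻¹
        * (xf (-ε) p/(1+(xf (-ε) p)^2) * Real.exp (-(xf (-ε) p)^2/2)) := by
      rw [div_lt_iff₀ (by positivity)]
      calc (1:ℝ) < Real.exp (Gf (-ε) p) := hexp
        _ = (Real.sqrt (2*π))⁻¹
            * (xf (-ε) p/(1+(xf (-ε) p)^2) * Real.exp (-(xf (-ε) p)^2/2)) * (2*(p:ℝ)) := by
            rw [hid]; ring
    have htb : 1/(2*(p:ℝ)) < 1 - stdNormalCDF (xf (-ε) p) := by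
      rw [htail]
      calc 1/(2*(p:ℝ)) < (Real.sqrt (2*π))⁻¹
            * (xf (-ε) p/(1+(xf (-ε) p)^2) * Real.exp (-(xf (-ε) p)^2/2)) := hlt
        _ ≤ (Real.sqrt (2*π))⁻¹ * ∫ t in Set.Ioi (xf (-ε) p), Real.exp (-t^2/2) :=
            mul_le_mul_of_nonneg_left (tail_lb hxl) (by positivity)
    by_contra hcon
    push_neg at hcon
    have := cdf_mono hcon
    rw [← hap] at htb
    linarith
  -- conclude
  have hsL : sf p = Real.sqrt 2 * Real.sqrt (Lf p) := by
    unfold sf; exact Real.sqrt_mul (by norm_num) _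
  have hxup : xf ε p = sf p - cf p/(2*sf p) + ε / Real.sqrt (Lf p) := by
    unfold xf df
    rw [hsL]
    have h2 : Real.sqrt 2 ≠ 0 := ne_of_gt hsqrt2
    have hLne : Real.sqrt (Lf p) ≠ 0 := ne_of_gt hsqL
    field_simp
    ring
  have hxlo : xf (-ε) p = sf p - cf p/(2*sf p) - ε / Real.sqrt (Lf p) := by
    unfold xf df
    rw [hsL]
    have h2 : Real.sqrt 2 ≠ 0 := ne_of_gt hsqrt2
    have hLne : Real.sqrt (Lf p) ≠ 0 := ne_of_gt hsqL
    field_simp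
    ring
  have hkey : Real.sqrt (Lf p) * (ε / Real.sqrt (Lf p)) = ε :=
    mul_div_cancel₀ ε (ne_of_gt hsqL)
  have hgoal : ‖Real.sqrt (Lf p) * (a p - sf p + cf p/(2*sf p))‖ < ε := by
    rw [Real.norm_eq_abs, abs_lt]
    constructor
    · have h1 : -(ε / Real.sqrt (Lf p)) < a p - sf p + cf p/(2*sf p) := by
        rw [hxlo] at hlo; linarith
      nlinarith [mul_lt_mul_of_pos_left h1 hsqL]
    · have h1 : a p - sf p + cf p/(2*sf p) < ε / Real.sqrt (Lf p) := by
        rw [hxup] at hup; linarith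
      nlinarith [mul_lt_mul_of_pos_left h1 hsqL]
  simpa only [Lf, sf, cf] using hgoal
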